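/- Let u > 0 and let f : [0,u] → ℝ be nonnegative, continuous and concave with maximum value h > 0. Let ε ∈ [0,1] and set τ = ε·h. Then ∫_0^u (max(f(t), τ) − f(t)) dt ≤ (ε²/2)·u·h. -/

import Mathlib

open Set intervalIntegral

lemma side_bound (c h τ ε : ℝ) (hc : 0 ≤ c) (hh : 0 < h)
    (hε0 : 0 ≤ ε) (hε1 : ε ≤ 1) (hτ : τ = ε * h)
    (g : ℝ → ℝ) (hgc : ContinuousOn g (Set.Icc 0 c))
    (hg : ∀ t ∈ Set.Icc 0 c, t / c * h ≤ g t) :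
    ∫ t in (0:ℝ)..c, (max (g t) τ - g t) ≤ ε ^ 2 / 2 * c * h := by
  rcases eq_or_lt_of_le hc with rfl | hcpos
  · simp
  set M : ℝ → ℝ := fun t => max (τ - h / c * t) 0 with hM
  have hMcont : Continuous M := (continuous_const.sub (continuous_const.mul continuous_id)).max continuous_const
  have hεc : ε * c ≤ c := by nlinarith
  have hεc0 : 0 ≤ ε * c := mul_nonneg hε0 hc
  have key : ∀ t ∈ Icc (0:ℝ) c, max (g t) τ - g t ≤ M t := by
    intro t ht
    have h1 : t / c * h = h / c * t := by ring
    have h2 : h / c * t ≤ g t := by rw [← h1]; exact hg t ht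
    rcases le_total (g t) τ with hle | hle
    · simp only [hM, max_eq_right hle]
      exact le_max_of_le_left (by linarith)
    · simp only [hM, max_eq_left hle]
      simp [le_max_iff]
  have int1 : IntervalIntegrable (fun t => max (g t) τ - g t) MeasureTheory.volume 0 c := by
    apply ContinuousOn.intervalIntegrable
    rw [Set.uIcc_of_le hc]
    exact (hgc.sup continuousOn_const).sub hgc
  have int2 : IntervalIntegrable M MeasureTheory.volume 0 c := hMcont.intervalIntegrable _ _
  have step1 : ∫ t in (0:ℝ)..c, (max (g t) τ - g t) ≤ ∫ t in (0:ℝ)..c, M t :=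
    integral_mono_on hc int1 int2 key
  have split : ∫ t in (0:ℝ)..c, M t =
      (∫ t in (0:ℝ)..(ε*c), M t) + ∫ t in (ε*c)..c, M t :=
    (integral_add_adjacent_intervals (hMcont.intervalIntegrable _ _) (hMcont.intervalIntegrable _ _)).symm
  have hzero : ∫ t in (ε*c)..c, M t = 0 := by
    have heq : EqOn M (fun _ => (0:ℝ)) (uIcc (ε*c) c) := by
      intro t ht
      rw [Set.uIcc_of_le hεc] at ht
      have : τ - h / c * t ≤ 0 := by
        have : ε * c ≤ t := ht.1
        have hhc : 0 < h / c := div_pos hh hcpos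
        have : h / c * (ε * c) ≤ h / c * t := by nlinarith
        have : h / c * (ε * c) = ε * h := by field_simp
        nlinarith [mul_le_mul_of_nonneg_left ht.1 (le_of_lt hhc)]
      simp [hM, max_eq_right this]
    rw [integral_congr heq]
    simp
  have hlin : ∫ t in (0:ℝ)..(ε*c), M t = ∫ t in (0:ℝ)..(ε*c), (τ - h / c * t) := by
    apply integral_congr
    intro t ht
    rw [Set.uIcc_of_le hεc0] at ht
    have hhc : 0 < h / c := div_pos hh hcpos
    have h3 : h / c * t ≤ h / c * (ε * c) := mul_le_mul_of_nonneg_left ht.2 (le_of_lt hhc)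
    have h4 : h / c * (ε * c) = ε * h := by field_simp
    have : 0 ≤ τ - h / c * t := by nlinarith
    simp [hM, max_eq_left this]
  have hcomp : ∫ t in (0:ℝ)..(ε*c), (τ - h / c * t) = τ * (ε*c) - h / c * ((ε*c)^2 / 2) := by
    rw [integral_sub (g := fun t => h / c * t) intervalIntegrable_const
      (((continuous_const.mul continuous_id').intervalIntegrable _ _))]
    rw [intervalIntegral.integral_const_mul, integral_id, integral_const]
    simp
    ring
  rw [split, hzero, hlin, hcomp] at step1
  calc ∫ t in (0:ℝ)..c, (max (g t) τ - g t)
      ≤ τ * (ε*c) - h / c * ((ε*c)^2 / 2) + 0 := step1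
    _ = ε ^ 2 / 2 * c * h := by rw [hτ]; field_simp; ring

/-- The cost of the rudimentary strategy with target `τ = ε·h` applied to a
nonnegative, continuous, concave function `f` on `[0,u]` with maximum value `h > 0` is at
most `(ε²/2)·u·h`. -/
theorem rudimentary_strategy_cost
    (u : ℝ) (hu : 0 < u) (f : ℝ → ℝ)
    (hf_nonneg : ∀ t ∈ Set.Icc 0 u, 0 ≤ f t)
    (hf_cont : ContinuousOn f (Set.Icc 0 u))
    (hf_conc : ConcaveOn ℝ (Set.Icc 0 u) f)
    (h : ℝ) (hh_pos : 0 < h)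
    (hh_max : IsGreatest (f '' Set.Icc 0 u) h)
    (ε : ℝ) (hε : ε ∈ Set.Icc (0 : ℝ) 1)
    (τ : ℝ) (hτ : τ = ε * h) :
    ∫ t in (0 : ℝ)..u, (max (f t) τ - f t) ≤ ε ^ 2 / 2 * u * h := by
  obtain ⟨c, hcmem, hfc⟩ := hh_max.1
  obtain ⟨hc0, hcu⟩ := hcmem
  obtain ⟨hε0, hε1⟩ := hε
  -- left part
  have hleft : ∫ t in (0:ℝ)..c, (max (f t) τ - f t) ≤ ε ^ 2 / 2 * c * h := by
    apply side_bound c h τ ε hc0 hh_pos hε0 hε1 hτ f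
      (hf_cont.mono (Set.Icc_subset_Icc le_rfl hcu))
    intro t ht
    rcases eq_or_lt_of_le hc0 with rfl | hcpos
    · obtain ⟨ht0, ht1⟩ := ht
      have : t = 0 := le_antisymm ht1 ht0
      subst this
      simpa using hf_nonneg 0 ⟨le_rfl, le_of_lt hu⟩
    · have h0mem : (0:ℝ) ∈ Set.Icc (0:ℝ) u := ⟨le_rfl, le_of_lt hu⟩
      have hcmem : c ∈ Set.Icc (0:ℝ) u := ⟨hc0, hcu⟩
      have ha : (0:ℝ) ≤ 1 - t / c := by
        have : t / c ≤ 1 := (div_le_one hcpos).2 ht.2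
        linarith
      have hb : 0 ≤ t / c := div_nonneg ht.1 hc0
      have hconc := hf_conc.2 h0mem hcmem ha hb (by ring)
      have hx : (1 - t / c) • (0:ℝ) + (t / c) • c = t := by
        simp [smul_eq_mul]
        field_simp
      rw [hx] at hconc
      have hnn : 0 ≤ (1 - t / c) * f 0 := mul_nonneg ha (hf_nonneg 0 h0mem)
      simp only [smul_eq_mul] at hconc
      nlinarith [hconc]
  -- right part
  have hright : ∫ t in c..u, (max (f t) τ - f t) ≤ ε ^ 2 / 2 * (u - c) * h := by
    have hcomp : ∫ s in (0:ℝ)..(u - c), (max (f (u - s)) τ - f (u - s))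
        = ∫ t in c..u, (max (f t) τ - f t) := by
      rw [intervalIntegral.integral_comp_sub_left (fun t => max (f t) τ - f t) u]
      norm_num
    rw [← hcomp]
    apply side_bound (u - c) h τ ε (by linarith) hh_pos hε0 hε1 hτ
    · apply hf_cont.comp (continuous_const.sub continuous_id).continuousOn
      intro s hs
      simp only [id_eq, Set.mem_Icc, Pi.sub_apply]
      constructor <;> linarith [hs.1, hs.2]
    · intro s hs
      rcases eq_or_lt_of_le (sub_nonneg.2 hcu) with heq | hpos
      · have : s = 0 := le_antisymm (by rw [← heq] at hs; exact hs.2) hs.1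
        subst this
        have : u - c = 0 := heq.symm
        rw [this]
        simpa using hf_nonneg u ⟨le_of_lt hu, le_rfl⟩
      · have humem : u ∈ Set.Icc (0:ℝ) u := ⟨le_of_lt hu, le_rfl⟩
        have hcmem : c ∈ Set.Icc (0:ℝ) u := ⟨hc0, hcu⟩
        have ha : (0:ℝ) ≤ 1 - s / (u - c) := by
          have : s / (u - c) ≤ 1 := (div_le_one hpos).2 hs.2
          linarith
        have hb : 0 ≤ s / (u - c) := div_nonneg hs.1 (by linarith)
        have hconc := hf_conc.2 humem hcmem ha hb (by ring)
        have hx : (1 - s / (u - c)) • u + (s / (u - c)) • c = u - s := by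
          simp only [smul_eq_mul]
          field_simp
          ring
        rw [hx] at hconc
        have hnn : 0 ≤ (1 - s / (u - c)) * f u := mul_nonneg ha (hf_nonneg u humem)
        simp only [smul_eq_mul] at hconc
        nlinarith [hconc]
  have hsplit : ∫ t in (0:ℝ)..u, (max (f t) τ - f t)
      = (∫ t in (0:ℝ)..c, (max (f t) τ - f t)) + ∫ t in c..u, (max (f t) τ - f t) := by
    have hint : ∀ a b : ℝ, a ≤ b → Set.Icc a b ⊆ Set.Icc 0 u →
        IntervalIntegrable (fun t => max (f t) τ - f t) MeasureTheory.volume a b := by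
      intro a b hab hsub
      apply ContinuousOn.intervalIntegrable
      rw [Set.uIcc_of_le hab]
      exact ((hf_cont.mono hsub).sup continuousOn_const).sub (hf_cont.mono hsub)
    exact (intervalIntegral.integral_add_adjacent_intervals
      (hint 0 c hc0 (Set.Icc_subset_Icc le_rfl hcu))
      (hint c u hcu (Set.Icc_subset_Icc hc0 le_rfl))).symm
  rw [hsplit]
  have hsum : ε ^ 2 / 2 * c * h + ε ^ 2 / 2 * (u - c) * h = ε ^ 2 / 2 * u * h := by ring
  linarith
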